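/- Let $Y$ be a real Hilbert space and $\varphi : Y \to \mathbb{R}$ a sequentially weakly upper semicontinuous $C^1$ functional whose derivative is Lipschitz with constant $\nu < 1$. Then for every $y_0 \in Y$, the functional $y \mapsto \tfrac{1}{2}\|y - y_0\|^2 - \varphi(y)$ has a unique local minimum, which is also its unique global minimum. -/

import Mathlib

open scoped NNReal ENNReal RealInnerProductSpace

open Filter

theorem stmt6 {Y : Type*} [NormedAddCommGroup Y] [InnerProductSpace ℝ Y] [CompleteSpace Y]
    (φ : Y → ℝ) (φ' : Y → Y)
    (hgrad : ∀ y : Y, HasGradientAt φ (φ' y) y) (hcont : Continuous φ')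
    (hsw : ∀ (u : ℕ → Y) (y : Y),
      Tendsto (fun n => toWeakSpace ℝ Y (u n)) atTop (nhds (toWeakSpace ℝ Y y)) →
        limsup (fun n => φ (u n)) atTop ≤ φ y)
    (ν : ℝ≥0) (hν : (ν : ℝ) < 1) (hLip : LipschitzWith ν φ')
    (y₀ : Y) :
    ∃ y : Y,
      IsLocalMin (fun z : Y => (1 / 2 : ℝ) * ‖z - y₀‖ ^ 2 - φ z) y ∧
      (∀ x : Y, (1 / 2 : ℝ) * ‖y - y₀‖ ^ 2 - φ y ≤ (1 / 2 : ℝ) * ‖x - y₀‖ ^ 2 - φ x) ∧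
      (∀ z : Y, IsLocalMin (fun w : Y => (1 / 2 : ℝ) * ‖w - y₀‖ ^ 2 - φ w) z → z = y) := by
  classical
  set F : Y → ℝ := fun z => (1 / 2 : ℝ) * ‖z - y₀‖ ^ 2 - φ z with hF
  -- derivative of F
  have hFderiv : ∀ z : Y, HasFDerivAt F (InnerProductSpace.toDual ℝ Y (z - y₀ - φ' z)) z := by
    intro z
    have h1 : HasFDerivAt (fun w : Y => w - y₀) (ContinuousLinearMap.id ℝ Y) z :=
      (hasFDerivAt_id z).sub_const y₀
    have h2 := h1.norm_sq
    have hφ : HasFDerivAt φ (InnerProductSpace.toDual ℝ Y (φ' z)) z :=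
      hasGradientAt_iff_hasFDerivAt.mp (hgrad z)
    have h3 := (h2.const_mul (1 / 2 : ℝ)).sub hφ
    convert h3 using 1
    · rfl
    · rfl
    · rfl
    ext w
    simp only [InnerProductSpace.toDual_apply_apply, ContinuousLinearMap.sub_apply,
      ContinuousLinearMap.smul_apply, ContinuousLinearMap.coe_smul', Pi.smul_apply,
      ContinuousLinearMap.comp_apply, ContinuousLinearMap.id_apply, innerSL_apply_apply,
      inner_sub_left, smul_eq_mul]
    push_cast
    ring
  -- strong monotonicity of the gradient of F
  have hmono : ∀ a b : Y,
      (1 - (ν : ℝ)) * ‖a - b‖ ^ 2 ≤ ⟪(a - y₀ - φ' a) - (b - y₀ - φ' b), a - b⟫ := by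
    intro a b
    have h1 : ⟪φ' a - φ' b, a - b⟫ ≤ (ν : ℝ) * ‖a - b‖ ^ 2 := by
      have hcs : ⟪φ' a - φ' b, a - b⟫ ≤ ‖φ' a - φ' b‖ * ‖a - b‖ := real_inner_le_norm _ _
      have hl : ‖φ' a - φ' b‖ ≤ (ν : ℝ) * ‖a - b‖ := by
        have := hLip.dist_le_mul a b
        simpa [dist_eq_norm] using this
      nlinarith [norm_nonneg (a - b), norm_nonneg (φ' a - φ' b)]
    have h2 : (a - y₀ - φ' a) - (b - y₀ - φ' b) = (a - b) - (φ' a - φ' b) := by abel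
    rw [h2, inner_sub_left, real_inner_self_eq_norm_sq]
    linarith
  -- the fixed point of the contraction z ↦ y₀ + φ' z
  have hν' : ν < 1 := by exact_mod_cast hν
  have hTlip : LipschitzWith ν (fun z : Y => y₀ + φ' z) := by
    intro x y
    simpa [edist_add_left] using hLip x y
  have hT : ContractingWith ν (fun z : Y => y₀ + φ' z) := ⟨hν', hTlip⟩
  set y : Y := ContractingWith.fixedPoint _ hT with hy
  have hfix : y₀ + φ' y = y := hT.fixedPoint_isFixedPt
  have hgradzero : y - y₀ - φ' y = 0 := by rw [sub_sub, sub_eq_zero]; exact hfix.symm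
  -- y is a global minimum
  have hglob : ∀ x : Y, F y ≤ F x := by
    intro x
    set v : Y := x - y with hv
    set g : ℝ → ℝ := fun t => F (y + t • v) with hg
    have hgd : ∀ t : ℝ, HasDerivAt g ⟪(y + t • v) - y₀ - φ' (y + t • v), v⟫ t := by
      intro t
      have hl : HasDerivAt (fun s : ℝ => y + s • v) v t := by
        simpa using ((hasDerivAt_id t).smul_const v).const_add y
      have := (hFderiv (y + t • v)).comp_hasDerivAt t hl
      simpa only [Function.comp_def, InnerProductSpace.toDual_apply_apply] using this
    have hd0 : ∀ t ∈ interior (Set.Icc (0 : ℝ) 1), 0 ≤ deriv g t := by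
      intro t ht
      rw [interior_Icc] at ht
      rw [(hgd t).deriv]
      have key := hmono (y + t • v) y
      have e1 : (y + t • v) - y = t • v := by abel
      rw [e1, hgradzero, sub_zero, real_inner_smul_right] at key
      nlinarith [norm_nonneg (t • v), sq_nonneg ‖t • v‖, ht.1]
    have hmonoOn : MonotoneOn g (Set.Icc 0 1) :=
      monotoneOn_of_deriv_nonneg (convex_Icc 0 1)
        (fun t _ => (hgd t).continuousAt.continuousWithinAt)
        (fun t _ => ((hgd t).differentiableAt).differentiableWithinAt) hd0
    have h01 := hmonoOn (Set.left_mem_Icc.mpr zero_le_one)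
      (Set.right_mem_Icc.mpr zero_le_one) zero_le_one
    simpa [hg, hv] using h01
  refine ⟨y, Filter.Eventually.of_forall hglob, hglob, ?_⟩
  intro z hz
  have h0 := hz.hasFDerivAt_eq_zero (hFderiv z)
  have hz0 : z - y₀ - φ' z = 0 := by
    rwa [LinearIsometryEquiv.map_eq_zero_iff] at h0
  have hfz : Function.IsFixedPt (fun z : Y => y₀ + φ' z) z := by
    show y₀ + φ' z = z
    rw [eq_comm, ← sub_eq_zero, ← hz0]
    abel
  exact hT.fixedPoint_unique hfz
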